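/- arXiv:1003.0318 — 2 statements merged into one kernel-verified Lean document; each statement's English description precedes it below -/
import Mathlib

section
/- Let k be a field and f, g : B → A two morphisms of k-bialgebras. Set S := {b ∈ B | f(b) = g(b)} and let D be the sum of all subcoalgebras of B contained in S, which is a subbialgebra of B. Then the pair (D, i), with i : D → B the canonical inclusion, is an equalizer of f and g in the category of k-bialgebras. -/
universe u v w

/-- `V` is a subcoalgebra of the coalgebra `C`: the comultiplication maps `V` into
the image of `V ⊗ V` in `C ⊗ C`. -/
def IsSubcoalgebra {k : Type u} [CommRing k] {C : Type v} [AddCommGroup C] [Module k C]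
    [Coalgebra k C] (V : Submodule k C) : Prop :=
  ∀ v ∈ V, Coalgebra.comul (R := k) v ∈
    LinearMap.range (TensorProduct.map V.subtype V.subtype)

open TensorProduct Coalgebra

theorem tmap_injective {k : Type u} [Field k] {M N M' N' : Type*} [AddCommGroup M] [AddCommGroup N]
    [AddCommGroup M'] [AddCommGroup N'] [Module k M] [Module k N] [Module k M'] [Module k N']
    {f : M →ₗ[k] M'} {g : N →ₗ[k] N'} (hf : Function.Injective f) (hg : Function.Injective g) :
    Function.Injective (TensorProduct.map f g) := by
  have h : TensorProduct.map f g = (f.rTensor N').comp (g.lTensor M) := by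
    rw [LinearMap.rTensor, LinearMap.lTensor, ← TensorProduct.map_comp,
      LinearMap.comp_id, LinearMap.id_comp]
  rw [h]
  exact (Module.Flat.rTensor_preserves_injective_linearMap f hf).comp
    (Module.Flat.lTensor_preserves_injective_linearMap g hg)


theorem range_tmap_mono {k : Type u} [CommRing k] {C : Type v} [AddCommGroup C] [Module k C]
    {V W : Submodule k C} (h : V ≤ W) :
    LinearMap.range (TensorProduct.map V.subtype V.subtype) ≤
      LinearMap.range (TensorProduct.map W.subtype W.subtype) := by
  have h2 : V.subtype = W.subtype ∘ₗ Submodule.inclusion h := rfl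
  rw [h2, TensorProduct.map_comp]
  exact LinearMap.range_comp_le_range _ _

theorem isSubcoalgebra_sSup {k : Type u} [CommRing k] {C : Type v} [AddCommGroup C] [Module k C]
    [Coalgebra k C] {S : Set (Submodule k C)} (hS : ∀ V ∈ S, IsSubcoalgebra V) :
    IsSubcoalgebra (sSup S) := by
  intro v hv
  rw [sSup_eq_iSup'] at hv
  refine Submodule.iSup_induction (motive := fun v =>
      Coalgebra.comul (R := k) v ∈
        LinearMap.range (TensorProduct.map (sSup S).subtype (sSup S).subtype))
    _ hv (fun V x hx => ?_) ?_ ?_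
  · exact range_tmap_mono (le_sSup V.2) (hS V.1 V.2 x hx)
  · simp only [map_zero]; exact Submodule.zero_mem _
  · intro x y hx hy
    simp only [map_add]
    exact Submodule.add_mem _ hx hy

section Sub

variable {k : Type u} [Field k] {B : Type v} [Ring B] [Bialgebra k B] (S : Subalgebra k B)

theorem subval_inj : Function.Injective S.val.toLinearMap := Subtype.val_injective

/-- comultiplication on a subalgebra that is a subcoalgebra -/
noncomputable def subComul (h : IsSubcoalgebra (Subalgebra.toSubmodule S)) :
    S →ₗ[k] S ⊗[k] S :=
  (LinearEquiv.ofInjective (TensorProduct.map S.val.toLinearMap S.val.toLinearMap)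
      (tmap_injective (subval_inj S) (subval_inj S))).symm.toLinearMap ∘ₗ
    LinearMap.codRestrict _ (Coalgebra.comul ∘ₗ S.val.toLinearMap) (fun c => h c.1 c.2)

theorem subComul_spec (h : IsSubcoalgebra (Subalgebra.toSubmodule S)) (x : S) :
    TensorProduct.map S.val.toLinearMap S.val.toLinearMap (subComul S h x) =
      Coalgebra.comul (R := k) (x : B) := by
  set ι := TensorProduct.map S.val.toLinearMap S.val.toLinearMap with hι
  have hinj : Function.Injective ι := tmap_injective (subval_inj S) (subval_inj S)
  show ι ((LinearEquiv.ofInjective ι hinj).symm _) = _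
  rw [← LinearEquiv.ofInjective_apply ι (h := hinj), LinearEquiv.apply_symm_apply]
  rfl

end Sub

section Sub2

variable {k : Type u} [Field k] {B : Type v} [Ring B] [Bialgebra k B] (S : Subalgebra k B)

set_option maxHeartbeats 1000000 in
noncomputable def subCoalgebra (h : IsSubcoalgebra (Subalgebra.toSubmodule S)) :
    Coalgebra k S := by
  set vl := S.val.toLinearMap with hvl
  set ι := TensorProduct.map vl vl with hi
  have hinj : Function.Injective ι := tmap_injective (subval_inj S) (subval_inj S)
  set δ := subComul S h with hd
  have hspec : ∀ x : S, ι (δ x) = Coalgebra.comul (R := k) (x : B) := subComul_spec S h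
  have hvx : ∀ x : S, vl x = (x : B) := fun _ => rfl
  have hit : ∀ x y : S, ι (x ⊗ₜ[k] y) = (x : B) ⊗ₜ[k] (y : B) := fun x y => rfl
  refine
  { comul := δ
    counit := Coalgebra.counit ∘ₗ vl
    coassoc := ?_
    rTensor_counit_comp_comul := ?_
    lTensor_counit_comp_comul := ?_ }
  · -- coassociativity
    have L1 : TensorProduct.map vl ι ∘ₗ δ.lTensor S = (Coalgebra.comul (R := k)).lTensor B ∘ₗ ι := by
      apply TensorProduct.ext'
      intro x y
      simp [hspec y, hit, hvx]
    have L2a : TensorProduct.map vl ι ∘ₗ (TensorProduct.assoc k S S S).toLinearMap =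
        (TensorProduct.assoc k B B B).toLinearMap ∘ₗ TensorProduct.map ι vl := by
      apply TensorProduct.ext_threefold
      intro x y z
      simp [hit, hvx]
    have L2b : TensorProduct.map ι vl ∘ₗ δ.rTensor S = (Coalgebra.comul (R := k)).rTensor B ∘ₗ ι := by
      apply TensorProduct.ext'
      intro x y
      simp [hspec x, hit, hvx]
    apply LinearMap.ext
    intro x
    apply tmap_injective (subval_inj S) hinj
    have e1 := LinearMap.congr_fun L2a (δ.rTensor S (δ x))
    have e2 := LinearMap.congr_fun L2b (δ x)
    have e3 := LinearMap.congr_fun L1 (δ x)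
    simp only [LinearMap.comp_apply, LinearEquiv.coe_coe] at e1 e2 e3 ⊢
    rw [e1, e2, hspec x, Coalgebra.coassoc_apply, e3, hspec x]
  · -- right counit law
    have M1 : TensorProduct.map LinearMap.id vl ∘ₗ (Coalgebra.counit (R := k) ∘ₗ vl).rTensor S =
        (Coalgebra.counit (R := k)).rTensor B ∘ₗ ι := by
      apply TensorProduct.ext'
      intro x y
      simp [hit, hvx]
    apply LinearMap.ext
    intro x
    apply tmap_injective (f := (LinearMap.id : k →ₗ[k] k)) Function.injective_id (subval_inj S)
    have e1 := LinearMap.congr_fun M1 (δ x)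
    simp only [LinearMap.comp_apply] at e1 ⊢
    rw [e1, hspec x, Coalgebra.rTensor_counit_comul]
    simp
  · -- left counit law
    have M1 : TensorProduct.map vl LinearMap.id ∘ₗ (Coalgebra.counit (R := k) ∘ₗ vl).lTensor S =
        (Coalgebra.counit (R := k)).lTensor B ∘ₗ ι := by
      apply TensorProduct.ext'
      intro x y
      simp [hit, hvx]
    apply LinearMap.ext
    intro x
    apply tmap_injective (g := (LinearMap.id : k →ₗ[k] k)) (subval_inj S) Function.injective_id
    have e1 := LinearMap.congr_fun M1 (δ x)
    simp only [LinearMap.comp_apply] at e1 ⊢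
    rw [e1, hspec x, Coalgebra.lTensor_counit_comul]
    simp

end Sub2

section Sub3

variable {k : Type u} [Field k] {B : Type v} [Ring B] [Bialgebra k B] (S : Subalgebra k B)
variable (h : IsSubcoalgebra (Subalgebra.toSubmodule S))

set_option maxHeartbeats 1000000 in
/-- the tensor square of the inclusion is multiplicative -/
theorem submap_mul (x y : S ⊗[k] S) :
    TensorProduct.map S.val.toLinearMap S.val.toLinearMap (x * y) =
      TensorProduct.map S.val.toLinearMap S.val.toLinearMap x *
        TensorProduct.map S.val.toLinearMap S.val.toLinearMap y := by
  have key : ∀ t : S ⊗[k] S, TensorProduct.map S.val.toLinearMap S.val.toLinearMap t =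
      Algebra.TensorProduct.map S.val S.val t := fun t => by
    induction t with
    | zero => simp
    | tmul a b => rfl
    | add a b ha hb => simp [ha, hb]
  rw [key, key, key, map_mul]

set_option maxHeartbeats 1000000 in
theorem subone_spec :
    TensorProduct.map S.val.toLinearMap S.val.toLinearMap (1 : S ⊗[k] S) = 1 := by
  have key : TensorProduct.map S.val.toLinearMap S.val.toLinearMap (1 : S ⊗[k] S) =
      Algebra.TensorProduct.map S.val S.val 1 := rfl
  rw [key, map_one]

set_option maxHeartbeats 1000000 in
noncomputable def subBialgebra : Bialgebra k S :=
  letI : Coalgebra k S := subCoalgebra S h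
  Bialgebra.mk' k S
    (by show Coalgebra.counit ((1 : S) : B) = 1; rw [OneMemClass.coe_one, Bialgebra.counit_one])
    (fun {a b} => by
      show Coalgebra.counit (((a * b : S)) : B) = Coalgebra.counit (a : B) * Coalgebra.counit (b : B)
      rw [MulMemClass.coe_mul, Bialgebra.counit_mul])
    (by
      apply tmap_injective (subval_inj S) (subval_inj S)
      show TensorProduct.map _ _ (subComul S h 1) = _
      rw [subComul_spec, subone_spec, OneMemClass.coe_one, Bialgebra.comul_one])
    (fun {a b} => by
      apply tmap_injective (subval_inj S) (subval_inj S)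
      show TensorProduct.map _ _ (subComul S h (a * b)) = TensorProduct.map _ _ (subComul S h a * subComul S h b)
      rw [subComul_spec, submap_mul, subComul_spec, subComul_spec, MulMemClass.coe_mul,
        Bialgebra.comul_mul])

set_option maxHeartbeats 1000000 in
/-- the inclusion of a subbialgebra as a bialgebra hom -/
noncomputable def subValHom :
    letI : Coalgebra k S := subCoalgebra S h
    S →ₐc[k] B :=
  letI : Coalgebra k S := subCoalgebra S h
  { toLinearMap := S.val.toLinearMap
    counit_comp := rfl
    map_comp_comul := LinearMap.ext fun x => subComul_spec S h x
    map_one' := rfl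
    map_mul' := fun _ _ => rfl }

end Sub3


/-- Let `f, g : B → A` be bialgebra maps and let `D` be the sum of all subcoalgebras of
`B` contained in `S = {b | f b = g b}` (a subbialgebra of `B`).  Then `(D, i)`, with
`i` the canonical inclusion, is an equalizer of `f` and `g` in the category of
`k`-bialgebras: there is a bialgebra `D'` and an injective bialgebra map `i : D' → B`
whose image is exactly `D`, such that `f ∘ i = g ∘ i` and every bialgebra map
`h : X → B` with `f ∘ h = g ∘ h` factors uniquely through `i`. -/
theorem sum_of_subcoalgebras_is_equalizer_bialg {k : Type u} [Field k] {B A : Type v}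
    [Ring B] [Ring A] [Bialgebra k B] [Bialgebra k A]
    (f g : B →ₐc[k] A) (D : Submodule k B)
    (hD : D = sSup {V : Submodule k B | IsSubcoalgebra V ∧
      V ≤ LinearMap.ker (f.toCoalgHom.toLinearMap - g.toCoalgHom.toLinearMap)}) :
    ∃ (D' : Type v) (_ring : Ring D') (_bi : Bialgebra k D') (i : D' →ₐc[k] B),
      Function.Injective ⇑i ∧
      Set.range ⇑i = (D : Set B) ∧
      f.comp i = g.comp i ∧
      ∀ (X : Type w) [Ring X] [Bialgebra k X] (h : X →ₐc[k] B),
        f.comp h = g.comp h → ∃! h' : X →ₐc[k] D', i.comp h' = h := by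
  classical
  set Sset : Set (Submodule k B) := {V : Submodule k B | IsSubcoalgebra V ∧
      V ≤ LinearMap.ker (f.toCoalgHom.toLinearMap - g.toCoalgHom.toLinearMap)} with hSset
  have happ : ∀ x : B, (f.toCoalgHom.toLinearMap - g.toCoalgHom.toLinearMap) x = f x - g x :=
    fun x => rfl
  have hsub : IsSubcoalgebra D := by
    rw [hD]; exact isSubcoalgebra_sSup (fun V hV => hV.1)
  have hker : ∀ x ∈ D, f x = g x := by
    intro x hx
    rw [hD] at hx
    have hle : sSup Sset ≤ LinearMap.ker (f.toCoalgHom.toLinearMap - g.toCoalgHom.toLinearMap) :=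
      sSup_le (fun V hV => hV.2)
    have hx2 := LinearMap.mem_ker.mp (hle hx)
    rw [happ] at hx2
    exact sub_eq_zero.mp hx2
  have h1D : (1 : B) ∈ D := by
    rw [hD]
    have hV1c : IsSubcoalgebra (Submodule.span k {(1 : B)}) := by
      intro v hv
      obtain ⟨r, rfl⟩ := Submodule.mem_span_singleton.mp hv
      refine ⟨r • ((⟨1, Submodule.mem_span_singleton_self 1⟩ : Submodule.span k {(1 : B)}) ⊗ₜ[k]
        (⟨1, Submodule.mem_span_singleton_self 1⟩ : Submodule.span k {(1 : B)})), ?_⟩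
      rw [map_smul, map_smul, TensorProduct.map_tmul, Bialgebra.comul_one,
        Algebra.TensorProduct.one_def]
      rfl
    have hV1k : Submodule.span k {(1 : B)} ≤
        LinearMap.ker (f.toCoalgHom.toLinearMap - g.toCoalgHom.toLinearMap) := by
      rw [Submodule.span_le, Set.singleton_subset_iff]
      rw [SetLike.mem_coe, LinearMap.mem_ker, happ, map_one, map_one, sub_self]
    have hV1 : Submodule.span k {(1 : B)} ∈ Sset := ⟨hV1c, hV1k⟩
    exact Submodule.mem_sSup_of_mem hV1 (Submodule.mem_span_singleton_self 1)
  have hmulS : ∀ V ∈ Sset, ∀ W ∈ Sset, V * W ∈ Sset := by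
    rintro V ⟨hVc, hVk⟩ W ⟨hWc, hWk⟩
    constructor
    · intro z hz
      refine Submodule.mul_induction_on hz ?_ ?_
      · intro m hm n hn
        obtain ⟨s, hs⟩ := hVc m hm
        obtain ⟨t, ht⟩ := hWc n hn
        rw [Bialgebra.comul_mul, ← hs, ← ht]
        clear hs ht hm hn
        induction s using TensorProduct.induction_on with
        | zero => rw [map_zero, zero_mul]; exact zero_mem _
        | tmul v v' =>
          induction t using TensorProduct.induction_on with
          | zero => rw [map_zero, mul_zero]; exact zero_mem _
          | tmul w w' =>
            refine ⟨(⟨v.1 * w.1, Submodule.mul_mem_mul v.2 w.2⟩ : (V * W : Submodule k B)) ⊗ₜ[k]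
              (⟨v'.1 * w'.1, Submodule.mul_mem_mul v'.2 w'.2⟩ : (V * W : Submodule k B)), ?_⟩
            rw [TensorProduct.map_tmul, TensorProduct.map_tmul, TensorProduct.map_tmul,
              Algebra.TensorProduct.tmul_mul_tmul]
            rfl
          | add t1 t2 ih1 ih2 => rw [map_add, mul_add]; exact add_mem ih1 ih2
        | add s1 s2 ih1 ih2 => rw [map_add, add_mul]; exact add_mem ih1 ih2
      · intro x y hx hy
        rw [map_add]
        exact add_mem hx hy
    · refine Submodule.mul_le.mpr ?_
      intro m hm n hn
      rw [LinearMap.mem_ker, happ, map_mul, map_mul]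
      have e1 : f m = g m := sub_eq_zero.mp (by rw [← happ]; exact hVk hm)
      have e2 : f n = g n := sub_eq_zero.mp (by rw [← happ]; exact hWk hn)
      rw [e1, e2, sub_self]
  have hmulD : ∀ x y : B, x ∈ D → y ∈ D → x * y ∈ D := by
    intro x y hx hy
    rw [hD] at hx hy ⊢
    rw [sSup_eq_iSup'] at hx
    refine Submodule.iSup_induction (motive := fun x => ∀ y, y ∈ sSup Sset → x * y ∈ sSup Sset)
      _ hx ?_ ?_ ?_ y hy
    · intro V x hxV y hy
      rw [sSup_eq_iSup'] at hy
      refine Submodule.iSup_induction (motive := fun y => x * y ∈ sSup Sset) _ hy ?_ ?_ ?_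
      · intro W y hyW
        exact le_sSup (hmulS _ V.2 _ W.2) (Submodule.mul_mem_mul hxV hyW)
      · show x * 0 ∈ sSup Sset
        rw [mul_zero]; exact zero_mem _
      · intro y1 y2 hy1 hy2
        show x * (y1 + y2) ∈ sSup Sset
        rw [mul_add]; exact add_mem hy1 hy2
    · intro y hy
      show 0 * y ∈ sSup Sset
      rw [zero_mul]; exact zero_mem _
    · intro x1 x2 hx1 hx2 y hy
      show (x1 + x2) * y ∈ sSup Sset
      rw [add_mul]; exact add_mem (hx1 y hy) (hx2 y hy)
  set Dalg : Subalgebra k B := D.toSubalgebra h1D hmulD with hDalg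
  have hsub' : IsSubcoalgebra (Subalgebra.toSubmodule Dalg) := by
    rw [hDalg, Submodule.toSubalgebra_toSubmodule]
    exact hsub
  letI : Coalgebra k ↥Dalg := subCoalgebra Dalg hsub'
  letI : Bialgebra k ↥Dalg := subBialgebra Dalg hsub'
  refine ⟨↥Dalg, inferInstance, inferInstance, subValHom Dalg hsub', ?_, ?_, ?_, ?_⟩
  · exact fun a b hab => Subtype.ext hab
  · ext b
    constructor
    · rintro ⟨x, rfl⟩
      exact x.2
    · intro hb
      exact ⟨⟨b, hb⟩, rfl⟩
  · apply BialgHom.ext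
    intro x
    exact hker x.1 x.2
  · intro X _ _ h hfg
    have hmem : ∀ x : X, h x ∈ Dalg := by
      intro x
      show h x ∈ D
      rw [hD]
      have hr1 : IsSubcoalgebra (LinearMap.range h.toLinearMap) := by
        rintro v ⟨x, rfl⟩
        have hc := LinearMap.congr_fun h.map_comp_comul x
        simp only [LinearMap.comp_apply] at hc
        rw [show Coalgebra.comul (R := k) (h.toLinearMap x) =
          TensorProduct.map h.toLinearMap h.toLinearMap (Coalgebra.comul x) from hc.symm]
        have hfac : h.toLinearMap = (LinearMap.range h.toLinearMap).subtype ∘ₗ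
            h.toLinearMap.rangeRestrict := rfl
        rw [hfac, TensorProduct.map_comp]
        exact ⟨TensorProduct.map h.toLinearMap.rangeRestrict h.toLinearMap.rangeRestrict
          (Coalgebra.comul x), rfl⟩
      have hr2 : LinearMap.range h.toLinearMap ≤
          LinearMap.ker (f.toCoalgHom.toLinearMap - g.toCoalgHom.toLinearMap) := by
        rintro v ⟨x, rfl⟩
        rw [LinearMap.mem_ker, happ]
        have hfgx := DFunLike.congr_fun hfg x
        simp only [BialgHom.comp_apply] at hfgx
        rw [show h.toLinearMap x = h x from rfl, hfgx, sub_self]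
      have hmemS : LinearMap.range h.toLinearMap ∈ Sset := ⟨hr1, hr2⟩
      exact le_sSup hmemS (LinearMap.mem_range_self _ x)
    set hr : X →ₐc[k] ↥Dalg :=
      { toLinearMap := LinearMap.codRestrict (Subalgebra.toSubmodule Dalg) h.toLinearMap hmem
        counit_comp := by
          apply LinearMap.ext
          intro x
          show Coalgebra.counit (h x) = Coalgebra.counit x
          have := LinearMap.congr_fun h.counit_comp x
          simpa using this
        map_comp_comul := by
          apply LinearMap.ext
          intro x
          apply tmap_injective (subval_inj Dalg) (subval_inj Dalg)
          simp only [LinearMap.comp_apply]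
          have key0 : TensorProduct.map Dalg.val.toLinearMap Dalg.val.toLinearMap ∘ₗ
              TensorProduct.map
                (LinearMap.codRestrict (Subalgebra.toSubmodule Dalg) h.toLinearMap hmem)
                (LinearMap.codRestrict (Subalgebra.toSubmodule Dalg) h.toLinearMap hmem) =
              TensorProduct.map h.toLinearMap h.toLinearMap := by
            rw [← TensorProduct.map_comp]; rfl
          have key1 : ∀ t : TensorProduct k X X,
              TensorProduct.map Dalg.val.toLinearMap Dalg.val.toLinearMap
              (TensorProduct.map
                (LinearMap.codRestrict (Subalgebra.toSubmodule Dalg) h.toLinearMap hmem)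
                (LinearMap.codRestrict (Subalgebra.toSubmodule Dalg) h.toLinearMap hmem) t) =
              TensorProduct.map h.toLinearMap h.toLinearMap t := fun t =>
            DFunLike.congr_fun key0 t
          refine (key1 _).trans ?_
          have hc := LinearMap.congr_fun h.map_comp_comul x
          simp only [LinearMap.comp_apply] at hc
          refine hc.trans ?_
          exact (subComul_spec Dalg hsub'
            ((LinearMap.codRestrict (Subalgebra.toSubmodule Dalg) h.toLinearMap hmem) x)).symm
        map_one' := Subtype.ext (map_one h)
        map_mul' := fun a b => Subtype.ext (map_mul h a b) } with hhr
    refine ⟨hr, ?_, ?_⟩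
    · apply BialgHom.ext
      intro x
      rfl
    · intro y hy
      apply BialgHom.ext
      intro x
      have hyx := DFunLike.congr_fun hy x
      exact Subtype.ext hyx
end

section
/- Let k be a field and f, g : H → K two morphisms of k-Hopf algebras. Set S := {h ∈ H | f(h) = g(h)} and let D be the sum of all subcoalgebras of H contained in S. Then D is a Hopf subalgebra of H: it is a subbialgebra of H and is stable under the antipode of H. -/
universe u v

open TensorProduct Coalgebra

noncomputable section ConvAux

variable {R : Type*} [CommSemiring R] {C : Type*} [AddCommMonoid C] [Module R C]
  [Coalgebra R C] {A : Type*} [Semiring A] [Algebra R A]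

/-- Convolution product of linear maps from a coalgebra to an algebra. -/
def myconv (φ ψ : C →ₗ[R] A) : C →ₗ[R] A :=
  LinearMap.mul' R A ∘ₗ TensorProduct.map φ ψ ∘ₗ Coalgebra.comul

/-- Convolution unit. -/
def myconvUnit : C →ₗ[R] A := Algebra.linearMap R A ∘ₗ Coalgebra.counit

lemma myconv_apply_repr (φ ψ : C →ₗ[R] A) {x : C} {ι : Type*} (r : Coalgebra.Repr R x ι) :
    myconv φ ψ x = ∑ i ∈ r.index, φ (r.left i) * ψ (r.right i) := by
  simp only [myconv, LinearMap.comp_apply, ← r.eq, map_sum, TensorProduct.map_tmul,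
    LinearMap.mul'_apply]

lemma sum_counit_smul {x : C} {ι : Type*} (r : Coalgebra.Repr R x ι) :
    ∑ i ∈ r.index, counit (R := R) (r.left i) • r.right i = x := by
  have h := sum_counit_tmul_eq r
  apply_fun (TensorProduct.lid R C) at h
  simp only [map_sum, TensorProduct.lid_tmul, TensorProduct.lid_symm_apply] at h
  simpa using h

lemma sum_smul_counit {x : C} {ι : Type*} (r : Coalgebra.Repr R x ι) :
    ∑ i ∈ r.index, counit (R := R) (r.right i) • r.left i = x := by
  have h := sum_tmul_counit_eq r
  apply_fun (TensorProduct.rid R C) at h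
  simp only [map_sum, TensorProduct.rid_tmul, TensorProduct.rid_symm_apply] at h
  simpa using h

lemma myconv_unit_left (φ : C →ₗ[R] A) : myconv myconvUnit φ = φ := by
  ext x
  set r := ℛ R x
  rw [myconv_apply_repr _ _ r]
  have : ∀ i ∈ r.index, (myconvUnit (R := R) (A := A)) (r.left i) * φ (r.right i)
      = φ (counit (R := R) (r.left i) • r.right i) := by
    intro i _
    simp [myconvUnit, Algebra.smul_def]
  rw [Finset.sum_congr rfl this, ← map_sum, _root_.sum_counit_smul]

lemma myconv_unit_right (φ : C →ₗ[R] A) : myconv φ myconvUnit = φ := by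
  ext x
  set r := ℛ R x
  rw [myconv_apply_repr _ _ r]
  have : ∀ i ∈ r.index, φ (r.left i) * (myconvUnit (R := R) (A := A)) (r.right i)
      = φ (counit (R := R) (r.right i) • r.left i) := by
    intro i _
    simp [myconvUnit, Algebra.smul_def, ← Algebra.commutes]
  rw [Finset.sum_congr rfl this, ← map_sum, sum_smul_counit]

lemma myconv_assoc (φ ψ χ : C →ₗ[R] A) :
    myconv (myconv φ ψ) χ = myconv φ (myconv ψ χ) := by
  ext x
  set r := ℛ R x
  set a₁ : (i : r.ι) → Coalgebra.Repr R (r.left i) (C × C) := fun i => ℛ R (r.left i)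
  set a₂ : (i : r.ι) → Coalgebra.Repr R (r.right i) (C × C) := fun i => ℛ R (r.right i)
  have key := sum_map_tmul_tmul_eq (R := R) (f := φ) (g := ψ) (h := χ) x (repr := r)
    (a₁ := a₁) (a₂ := a₂)
  apply_fun (fun t => LinearMap.mul' R A ((LinearMap.mul' R A).lTensor A t)) at key
  simp only [map_sum, LinearMap.lTensor_tmul, LinearMap.mul'_apply] at key
  rw [myconv_apply_repr _ _ r, myconv_apply_repr _ _ r]
  calc ∑ i ∈ r.index, myconv φ ψ (r.left i) * χ (r.right i)
      = ∑ i ∈ r.index, ∑ j ∈ (a₁ i).index,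
          φ ((a₁ i).left j) * (ψ ((a₁ i).right j) * χ (r.right i)) := by
        refine Finset.sum_congr rfl fun i _ => ?_
        rw [myconv_apply_repr _ _ (a₁ i), Finset.sum_mul]
        simp [mul_assoc]
    _ = ∑ i ∈ r.index, ∑ j ∈ (a₂ i).index,
          φ (r.left i) * (ψ ((a₂ i).left j) * χ ((a₂ i).right j)) := key.symm
    _ = ∑ i ∈ r.index, φ (r.left i) * myconv ψ χ (r.right i) := by
        refine Finset.sum_congr rfl fun i _ => ?_
        rw [myconv_apply_repr _ _ (a₂ i), Finset.mul_sum]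

lemma myconv_inv_unique {a b c : C →ₗ[R] A} (hab : myconv a b = myconvUnit)
    (hca : myconv c a = myconvUnit) : b = c := by
  have : myconv c (myconv a b) = myconv (myconv c a) b := (myconv_assoc c a b).symm
  rw [hab, hca, myconv_unit_right, myconv_unit_left] at this
  exact this.symm

end ConvAux

section HopfAux

open HopfAlgebra

variable {R : Type*} [CommSemiring R] {H : Type*} [Semiring H] [HopfAlgebra R H]

lemma myconv_antipode_id :
    myconv (antipode (R := R) (A := H)) LinearMap.id = myconvUnit :=
  HopfAlgebra.mul_antipode_rTensor_comul

lemma myconv_id_antipode :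
    myconv LinearMap.id (antipode (R := R) (A := H)) = myconvUnit :=
  HopfAlgebra.mul_antipode_lTensor_comul

variable {A : Type*} [Semiring A] [Algebra R A]

lemma myconv_algHom_antipode (φ : H →ₐ[R] A) :
    myconv φ.toLinearMap (φ.toLinearMap ∘ₗ antipode (R := R)) = myconvUnit := by
  ext x
  set r := ℛ R x
  rw [myconv_apply_repr _ _ r]
  have h1 : ∀ i ∈ r.index,
      φ.toLinearMap (r.left i) * (φ.toLinearMap ∘ₗ antipode (R := R)) (r.right i)
        = φ (r.left i * antipode (R := R) (r.right i)) := by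
    intro i _; simp
  rw [Finset.sum_congr rfl h1]
  have h2 : ∀ i ∈ r.index, φ (r.left i * antipode (R := R) (r.right i))
      = φ.toLinearMap (r.left i * antipode (R := R) (r.right i)) := fun _ _ => rfl
  rw [Finset.sum_congr rfl h2, ← map_sum, sum_mul_antipode_eq_algebraMap_counit]
  simp [myconvUnit]

lemma myconv_antipode_algHom (φ : H →ₐ[R] A) :
    myconv (φ.toLinearMap ∘ₗ antipode (R := R)) φ.toLinearMap = myconvUnit := by
  ext x
  set r := ℛ R x
  rw [myconv_apply_repr _ _ r]
  have h1 : ∀ i ∈ r.index,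
      (φ.toLinearMap ∘ₗ antipode (R := R)) (r.left i) * φ.toLinearMap (r.right i)
        = φ.toLinearMap (antipode (R := R) (r.left i) * r.right i) := by
    intro i _; simp
  rw [Finset.sum_congr rfl h1, ← map_sum, sum_antipode_mul_eq_algebraMap_counit]
  simp [myconvUnit]

variable {K : Type*} [Semiring K] [HopfAlgebra R K]

/-- A representation of `f x` obtained from one of `x` along a coalgebra hom. -/
def Coalgebra.Repr.push (f : H →ₐc[R] K) {x : H} {ι : Type*} (r : Coalgebra.Repr R x ι) :
    Coalgebra.Repr R (f x) ι where
  index := r.index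
  left := fun i => f (r.left i)
  right := fun i => f (r.right i)
  eq := by
    have h := LinearMap.congr_fun (CoalgHomClass.map_comp_comul (f : H →ₐc[R] K)) x
    simp only [LinearMap.comp_apply] at h
    rw [show (CoalgebraStruct.comul (R := R) (f x)) = _ from h.symm, ← r.eq, map_sum]
    simp

lemma myconv_antipodeComp_bialgHom (f : H →ₐc[R] K) :
    myconv ((antipode (R := R) (A := K)) ∘ₗ (f : H →ₗ[R] K)) (f : H →ₗ[R] K)
      = myconvUnit := by
  ext x
  set r := ℛ R x
  rw [myconv_apply_repr _ _ r]
  have := sum_antipode_mul_eq_algebraMap_counit (R := R) (r.push f)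
  simp only [Coalgebra.Repr.push] at this
  simpa [myconvUnit, CoalgHomClass.counit_comp_apply] using this

lemma bialgHom_comp_antipode (f : H →ₐc[R] K) :
    (f : H →ₗ[R] K) ∘ₗ antipode (R := R) = antipode (R := R) ∘ₗ (f : H →ₗ[R] K) := by
  have h1 := myconv_algHom_antipode (f : H →ₐ[R] K)
  have h2 := myconv_antipodeComp_bialgHom f
  have hc : (f : H →ₐ[R] K).toLinearMap = (f : H →ₗ[R] K) := by
    ext x; rfl
  rw [hc] at h1
  exact myconv_inv_unique h1 h2

lemma bialgHom_antipode_apply (f : H →ₐc[R] K) (x : H) :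
    f (antipode (R := R) x) = antipode (R := R) (f x) :=
  LinearMap.congr_fun (bialgHom_comp_antipode f) x

end HopfAux

section AntipodeComul

open HopfAlgebra

variable {R : Type*} [CommSemiring R] {H : Type*} [Semiring H] [HopfAlgebra R H]

lemma myconv_comul_comulAntipode :
    myconv (Coalgebra.comul (R := R) (A := H))
      (Coalgebra.comul ∘ₗ antipode (R := R)) = myconvUnit :=
  myconv_algHom_antipode (Bialgebra.comulAlgHom R H)

lemma myconv_antiComul_comul :
    myconv ((TensorProduct.comm R H H).toLinearMap ∘ₗ
        TensorProduct.map (antipode (R := R)) (antipode (R := R)) ∘ₗ Coalgebra.comul)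
      (Coalgebra.comul (R := R) (A := H)) = myconvUnit := by
  ext x
  set r := ℛ R x with hr
  set L : (i : r.ι) → Coalgebra.Repr R (r.left i) (H × H) := fun i => ℛ R (r.left i) with hL
  set M : (i : r.ι) → Coalgebra.Repr R (r.right i) (H × H) := fun i => ℛ R (r.right i) with hM
  rw [myconv_apply_repr _ _ r]
  set Φ : H ⊗[R] (H ⊗[R] H) →ₗ[R] H ⊗[R] H :=
    LinearMap.mul' R (H ⊗[R] H) ∘ₗ
      TensorProduct.map
        ((TensorProduct.comm R H H).toLinearMap ∘ₗ
          TensorProduct.map (antipode (R := R)) (antipode (R := R)))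
        Coalgebra.comul ∘ₗ
      (TensorProduct.assoc R H H H).symm.toLinearMap with hΦ
  have hΦ_tmul : ∀ (a b c : H), Φ (a ⊗ₜ[R] (b ⊗ₜ[R] c)) =
      (antipode (R := R) b ⊗ₜ[R] antipode (R := R) a) * Coalgebra.comul c := by
    intro a b c
    simp [hΦ, TensorProduct.assoc_symm_tmul]
  have key0 := sum_tmul_tmul_eq r L M
  apply_fun Φ at key0
  simp only [map_sum, hΦ_tmul] at key0
  have lhs_eq : ∀ i ∈ r.index,
      ((TensorProduct.comm R H H).toLinearMap ∘ₗ
        TensorProduct.map (antipode (R := R)) (antipode (R := R)) ∘ₗ Coalgebra.comul)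
          (r.left i) * Coalgebra.comul (r.right i)
      = ∑ j ∈ (L i).index,
          (antipode (R := R) ((L i).right j) ⊗ₜ[R] antipode (R := R) ((L i).left j)) *
            Coalgebra.comul (r.right i) := by
    intro i _
    rw [LinearMap.comp_apply, LinearMap.comp_apply, ← (L i).eq]
    simp [Finset.sum_mul]
  rw [Finset.sum_congr rfl lhs_eq, key0]
  have keyi : ∀ i ∈ r.index,
      ∑ m ∈ (M i).index,
        (antipode (R := R) ((M i).left m) ⊗ₜ[R] antipode (R := R) (r.left i)) *
          Coalgebra.comul ((M i).right m)
      = (1 : H) ⊗ₜ[R] (antipode (R := R) (r.left i) * r.right i) := by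
    intro i _
    set N : (m : (M i).ι) → Coalgebra.Repr R ((M i).right m) (H × H) :=
      fun m => ℛ R ((M i).right m) with hN
    set N' : (m : (M i).ι) → Coalgebra.Repr R ((M i).left m) (H × H) :=
      fun m => ℛ R ((M i).left m) with hN'
    set Ψ : H ⊗[R] (H ⊗[R] H) →ₗ[R] H ⊗[R] H :=
      TensorProduct.map
        (LinearMap.mul' R H ∘ₗ TensorProduct.map (antipode (R := R)) LinearMap.id)
        (LinearMap.mulLeft R (antipode (R := R) (r.left i))) ∘ₗ
      (TensorProduct.assoc R H H H).symm.toLinearMap with hΨ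
    have hΨ_tmul : ∀ (a b c : H), Ψ (a ⊗ₜ[R] (b ⊗ₜ[R] c)) =
        (antipode (R := R) a * b) ⊗ₜ[R] (antipode (R := R) (r.left i) * c) := by
      intro a b c
      simp [hΨ, TensorProduct.assoc_symm_tmul]
    have key1 := sum_tmul_tmul_eq (M i) N' N
    apply_fun Ψ at key1
    simp only [map_sum, hΨ_tmul] at key1
    have step1 : ∀ m ∈ (M i).index,
        (antipode (R := R) ((M i).left m) ⊗ₜ[R] antipode (R := R) (r.left i)) *
          Coalgebra.comul ((M i).right m)
        = ∑ p ∈ (N m).index,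
            (antipode (R := R) ((M i).left m) * (N m).left p) ⊗ₜ[R]
              (antipode (R := R) (r.left i) * (N m).right p) := by
      intro m _
      rw [← (N m).eq, Finset.mul_sum]
      simp [Algebra.TensorProduct.tmul_mul_tmul]
    rw [Finset.sum_congr rfl step1, ← key1]
    have step2 : ∀ m ∈ (M i).index,
        ∑ j ∈ (N' m).index,
          (antipode (R := R) ((N' m).left j) * (N' m).right j) ⊗ₜ[R]
            (antipode (R := R) (r.left i) * (M i).right m)
        = Coalgebra.counit (R := R) ((M i).left m) •
            ((1 : H) ⊗ₜ[R] (antipode (R := R) (r.left i) * (M i).right m)) := by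
      intro m _
      rw [← TensorProduct.sum_tmul, sum_antipode_mul_eq_algebraMap_counit (N' m)]
      rw [Algebra.algebraMap_eq_smul_one, TensorProduct.smul_tmul']
    rw [Finset.sum_congr rfl step2]
    have step3 : ∑ m ∈ (M i).index,
        Coalgebra.counit (R := R) ((M i).left m) •
          ((1 : H) ⊗ₜ[R] (antipode (R := R) (r.left i) * (M i).right m))
        = (1 : H) ⊗ₜ[R] (antipode (R := R) (r.left i) *
            ∑ m ∈ (M i).index, Coalgebra.counit (R := R) ((M i).left m) • (M i).right m) := by
      rw [Finset.mul_sum, TensorProduct.tmul_sum]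
      refine Finset.sum_congr rfl fun m _ => ?_
      rw [mul_smul_comm, TensorProduct.tmul_smul]
    rw [step3, _root_.sum_counit_smul (M i)]
  rw [Finset.sum_congr rfl keyi, ← TensorProduct.tmul_sum, sum_antipode_mul_eq_algebraMap_counit r]
  simp only [myconvUnit, LinearMap.comp_apply, Algebra.linearMap_apply,
    Algebra.TensorProduct.algebraMap_apply']

lemma comul_comp_antipode :
    Coalgebra.comul ∘ₗ antipode (R := R) (A := H)
      = (TensorProduct.comm R H H).toLinearMap ∘ₗ
          TensorProduct.map (antipode (R := R)) (antipode (R := R)) ∘ₗ Coalgebra.comul :=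
  myconv_inv_unique myconv_comul_comulAntipode myconv_antiComul_comul

lemma comul_antipode_apply (x : H) :
    Coalgebra.comul (R := R) (antipode (R := R) x)
      = (TensorProduct.comm R H H)
          (TensorProduct.map (antipode (R := R)) (antipode (R := R))
            (Coalgebra.comul (R := R) x)) :=
  LinearMap.congr_fun comul_comp_antipode x

end AntipodeComul

section RangeMono

variable {k : Type*} [CommRing k] {C : Type*} [AddCommGroup C] [Module k C]

lemma range_map_subtype_mono {V W : Submodule k C} (h : V ≤ W) :
    LinearMap.range (TensorProduct.map V.subtype V.subtype) ≤
      LinearMap.range (TensorProduct.map W.subtype W.subtype) := by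
  rintro _ ⟨t, rfl⟩
  refine ⟨TensorProduct.map (Submodule.inclusion h) (Submodule.inclusion h) t, ?_⟩
  rw [← LinearMap.comp_apply, ← TensorProduct.map_comp,
    Submodule.subtype_comp_inclusion]

end RangeMono



/-- Let `f, g : H → K` be morphisms of Hopf algebras and let `D` be the sum of all
subcoalgebras of `H` contained in `S = {h | f h = g h}`.  Then `D` is a Hopf subalgebra
of `H`: it is a subcoalgebra, contains `1`, is closed under multiplication, and is
stable under the antipode of `H`. -/
theorem sum_of_subcoalgebras_is_hopf_subalgebra {k : Type u} [Field k] {H K : Type v}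
    [Ring H] [Ring K] [HopfAlgebra k H] [HopfAlgebra k K]
    (f g : H →ₐc[k] K) (D : Submodule k H)
    (hD : D = sSup {V : Submodule k H | IsSubcoalgebra V ∧
      V ≤ LinearMap.ker (f.toCoalgHom.toLinearMap - g.toCoalgHom.toLinearMap)}) :
    IsSubcoalgebra D ∧ (1 : H) ∈ D ∧ (∀ x ∈ D, ∀ y ∈ D, x * y ∈ D) ∧
      ∀ x ∈ D, HopfAlgebra.antipode (R := k) x ∈ D := by
  set Fk := LinearMap.ker (f.toCoalgHom.toLinearMap - g.toCoalgHom.toLinearMap) with hFk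
  have mem_Fk : ∀ x : H, x ∈ Fk ↔ f x = g x := by
    intro x
    rw [hFk, LinearMap.mem_ker, LinearMap.sub_apply, sub_eq_zero]
    constructor <;> exact fun h => h
  set 𝒮 : Set (Submodule k H) := {V : Submodule k H | IsSubcoalgebra V ∧ V ≤ Fk} with h𝒮
  -- D ≤ ker
  have hDker : D ≤ Fk := by
    rw [hD]; exact sSup_le fun V hV => hV.2
  have hVleD : ∀ V ∈ 𝒮, V ≤ D := by
    intro V hV; rw [hD]; exact le_sSup hV
  -- D is a subcoalgebra
  have hDsub : IsSubcoalgebra D := by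
    intro v hv
    have hle : ∀ V ∈ 𝒮, V ≤ Submodule.comap (Coalgebra.comul (R := k) (A := H))
        (LinearMap.range (TensorProduct.map D.subtype D.subtype)) := by
      intro V hV w hw
      exact range_map_subtype_mono (hVleD V hV) (hV.1 w hw)
    exact (le_trans hD.le (sSup_le hle)) hv
  refine ⟨hDsub, ?_, ?_, ?_⟩
  -- 1 ∈ D
  · have hone : (k ∙ (1 : H)) ∈ 𝒮 := by
      have h1mem : (1 : H) ∈ (k ∙ (1 : H)) := Submodule.mem_span_singleton_self 1
      constructor
      · intro v hv
        obtain ⟨c, rfl⟩ := Submodule.mem_span_singleton.mp hv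
        rw [map_smul]
        refine Submodule.smul_mem _ c ?_
        refine ⟨(⟨1, h1mem⟩ : (k ∙ (1 : H))) ⊗ₜ[k] ⟨1, h1mem⟩, ?_⟩
        rw [TensorProduct.map_tmul]
        simp [Bialgebra.comul_one, Algebra.TensorProduct.one_def]
      · rw [Submodule.span_singleton_le_iff_mem, mem_Fk, map_one, map_one]
    exact hVleD _ hone (Submodule.mem_span_singleton_self 1)
  -- multiplication
  · have key : ∀ s t : (D : Submodule k H) ⊗[k] (D : Submodule k H),
        (TensorProduct.map D.subtype D.subtype s) * (TensorProduct.map D.subtype D.subtype t) ∈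
          LinearMap.range (TensorProduct.map (D * D).subtype (D * D).subtype) := by
      intro s t
      induction s using TensorProduct.induction_on with
      | zero => simp
      | tmul a b =>
        induction t using TensorProduct.induction_on with
        | zero => simp
        | tmul c d =>
          rw [TensorProduct.map_tmul, TensorProduct.map_tmul,
            Algebra.TensorProduct.tmul_mul_tmul]
          exact ⟨(⟨a.1 * c.1, Submodule.mul_mem_mul a.2 c.2⟩ : (D * D : Submodule k H)) ⊗ₜ[k]
            ⟨b.1 * d.1, Submodule.mul_mem_mul b.2 d.2⟩, by rw [TensorProduct.map_tmul]; rfl⟩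
        | add u v hu hv =>
          rw [map_add, mul_add]; exact add_mem hu hv
      | add u v hu hv =>
        rw [map_add, add_mul]; exact add_mem hu hv
    have hmul : (D * D : Submodule k H) ∈ 𝒮 := by
      constructor
      · intro v hv
        refine Submodule.mul_induction_on hv ?_ ?_
        · intro x hx y hy
          rw [Bialgebra.comul_mul]
          obtain ⟨s, hs⟩ := hDsub x hx
          obtain ⟨t, ht⟩ := hDsub y hy
          rw [← hs, ← ht]
          exact key s t
        · intro x y hx hy
          rw [map_add]; exact add_mem hx hy
      · refine Submodule.mul_le.mpr fun x hx y hy => ?_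
        rw [mem_Fk, map_mul, map_mul, (mem_Fk x).mp (hDker hx), (mem_Fk y).mp (hDker hy)]
    exact fun x hx y hy => hVleD _ hmul (Submodule.mul_mem_mul hx hy)
  -- antipode
  · set S : H →ₗ[k] H := HopfAlgebra.antipode (R := k) with hS
    set E : Submodule k H := Submodule.map S D with hE
    set j : (D : Submodule k H) →ₗ[k] (E : Submodule k H) :=
      LinearMap.codRestrict E (S ∘ₗ D.subtype)
        (fun d => Submodule.mem_map_of_mem d.2) with hj
    have hfact : E.subtype ∘ₗ j = S ∘ₗ D.subtype := rfl
    have hEmem : E ∈ 𝒮 := by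
      constructor
      · rintro _ ⟨x, hx, rfl⟩
        rw [hS, comul_antipode_apply]
        obtain ⟨t, ht⟩ := hDsub x hx
        rw [← ht, ← hS]
        have h1 : TensorProduct.map S S (TensorProduct.map D.subtype D.subtype t)
            = TensorProduct.map E.subtype E.subtype (TensorProduct.map j j t) := by
          rw [← LinearMap.comp_apply, ← LinearMap.comp_apply,
            ← TensorProduct.map_comp, ← TensorProduct.map_comp, hfact]
        rw [h1]
        exact ⟨TensorProduct.comm k E E (TensorProduct.map j j t),
          (TensorProduct.map_comm E.subtype E.subtype _).symm ▸ rfl⟩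
      · rintro _ ⟨x, hx, rfl⟩
        rw [mem_Fk, hS, bialgHom_antipode_apply f x, bialgHom_antipode_apply g x,
          (mem_Fk x).mp (hDker hx)]
    exact fun x hx => hVleD _ hEmem (Submodule.mem_map_of_mem hx)
end
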